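/- Let V be a nonempty finite type, let k ≥ 1, and let E_0, …, E_k be nonzero complex V×V matrices which are Hermitian, pairwise orthogonal idempotents (E_s · E_t equals E_s if s = t and equals the zero matrix otherwise) and which sum to the identity matrix. Let θ_0, …, θ_k be real numbers, let A = Σ_{s=0}^k θ_s E_s, let B = Σ_{s=0}^k (−1)^s E_s, and let τ > 0 be real. Then there exists γ ∈ ℂ with |γ| = 1 and exp(−iτA) = γ · B if and only if for every s ∈ {1, …, k} there is an odd integer z_s with τ·(θ_s − θ_{s−1}) = z_s · π. -/

import Mathlib

open NormedSpace

lemma aux_exp_sum_smul_idem {V : Type*} [Fintype V] [DecidableEq V] (k : ℕ)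
    (E : ℕ → Matrix V V ℂ)
    (hE_mul : ∀ s ≤ k, ∀ t ≤ k, E s * E t = if s = t then E s else 0)
    (hE_sum : ∑ s ∈ Finset.range (k + 1), E s = 1)
    (c : ℕ → ℂ) :
    NormedSpace.exp (∑ s ∈ Finset.range (k + 1), c s • E s)
      = ∑ s ∈ Finset.range (k + 1), Complex.exp (c s) • E s := by
  letI : SeminormedRing (Matrix V V ℂ) := Matrix.linftyOpSemiNormedRing
  letI : NormedRing (Matrix V V ℂ) := Matrix.linftyOpNormedRing
  letI : NormedAlgebra ℂ (Matrix V V ℂ) := Matrix.linftyOpNormedAlgebra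
  have hmul : ∀ c d : Fin (k+1) → ℂ,
      (∑ s : Fin (k+1), c s • E s) * (∑ s : Fin (k+1), d s • E s)
        = ∑ s : Fin (k+1), (c s * d s) • E s := by
    intro c d
    rw [Finset.sum_mul_sum]
    refine Finset.sum_congr rfl fun s _ => ?_
    rw [Finset.sum_eq_single s]
    · rw [Matrix.smul_mul, Matrix.mul_smul,
        hE_mul s (Nat.lt_succ_iff.mp s.isLt) s (Nat.lt_succ_iff.mp s.isLt)]
      simp [smul_smul]
    · intro t _ hts
      rw [Matrix.smul_mul, Matrix.mul_smul,
        hE_mul s (Nat.lt_succ_iff.mp s.isLt) t (Nat.lt_succ_iff.mp t.isLt)]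
      have : (s : ℕ) ≠ (t : ℕ) := fun h => hts.symm (Fin.val_injective h)
      simp [this]
    · simp
  have hone : (∑ s : Fin (k+1), E s) = 1 := by
    rw [← Finset.sum_range fun s => E s]
    exact hE_sum
  let φ : (Fin (k+1) → ℂ) →ₐ[ℂ] Matrix V V ℂ :=
  { toFun := fun c => ∑ s : Fin (k+1), c s • E s
    map_one' := by simpa using hone
    map_mul' := fun c d => by
      simp only [Pi.mul_apply]
      exact (hmul c d).symm
    map_zero' := by simp
    map_add' := fun c d => by simp [add_smul, Finset.sum_add_distrib]
    commutes' := fun r => by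
      simp only [Pi.algebraMap_apply, Algebra.algebraMap_self_apply]
      rw [← Finset.smul_sum, hone, Algebra.algebraMap_eq_smul_one] }
  have hφ : Continuous φ := by
    show Continuous fun c : Fin (k+1) → ℂ => ∑ s : Fin (k+1), c s • E s
    exact continuous_finset_sum _ fun s _ => (continuous_apply s).smul continuous_const
  have h := map_exp φ hφ (fun s : Fin (k+1) => c s)
  have hφc : φ (fun s : Fin (k+1) => c s) = ∑ s ∈ Finset.range (k + 1), c s • E s := by
    show (∑ s : Fin (k+1), c s • E s) = _
    rw [← Finset.sum_range fun s => c s • E s]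
  rw [hφc] at h
  refine h.symm.trans ?_
  show (∑ s : Fin (k+1), (NormedSpace.exp fun s : Fin (k+1) => c s) s • E (s:ℕ)) = _
  simp only [Pi.coe_exp]
  rw [← Complex.exp_eq_exp_ℂ, ← Finset.sum_range fun s => Complex.exp (c s) • E s]

lemma aux_coeff_ext {V : Type*} [Fintype V] [DecidableEq V] (k : ℕ)
    (E : ℕ → Matrix V V ℂ)
    (hE_ne : ∀ s ≤ k, E s ≠ 0)
    (hE_mul : ∀ s ≤ k, ∀ t ≤ k, E s * E t = if s = t then E s else 0)
    (a b : ℕ → ℂ)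
    (h : ∑ s ∈ Finset.range (k + 1), a s • E s = ∑ s ∈ Finset.range (k + 1), b s • E s)
    (t : ℕ) (ht : t ≤ k) : a t = b t := by
  have key : ∀ c : ℕ → ℂ, (∑ s ∈ Finset.range (k + 1), c s • E s) * E t = c t • E t := by
    intro c
    rw [Finset.sum_mul, Finset.sum_eq_single t]
    · rw [Matrix.smul_mul, hE_mul t ht t ht]; simp
    · intro s hs hst
      rw [Matrix.smul_mul, hE_mul s (Nat.lt_succ_iff.mp (Finset.mem_range.mp hs)) t ht]
      simp [hst]
    · intro h'; exact absurd (Finset.mem_range.mpr (Nat.lt_succ_of_le ht)) h'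
  have h2 : a t • E t = b t • E t := by rw [← key a, ← key b, h]
  have h3 : (a t - b t) • E t = 0 := by rw [sub_smul, h2, sub_self]
  rcases smul_eq_zero.mp h3 with h4 | h4
  · exact sub_eq_zero.mp h4
  · exact absurd h4 (hE_ne t ht)


/-- Perfect state transfer criterion via spectral decomposition:
`exp(-iτA)` is a unimodular multiple of `B = Σ (-1)^s E_s` iff all scaled consecutive
eigenvalue differences `τ(θ_s - θ_{s-1})` are odd multiples of `π`. -/
theorem stmt_0 {V : Type*} [Fintype V] [Nonempty V] [DecidableEq V]
    (k : ℕ) (hk : 1 ≤ k)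
    (E : ℕ → Matrix V V ℂ)
    (hE_ne : ∀ s ≤ k, E s ≠ 0)
    (hE_herm : ∀ s ≤ k, (E s).IsHermitian)
    (hE_mul : ∀ s ≤ k, ∀ t ≤ k, E s * E t = if s = t then E s else 0)
    (hE_sum : ∑ s ∈ Finset.range (k + 1), E s = 1)
    (θ : ℕ → ℝ) (τ : ℝ) (hτ : 0 < τ)
    (A B : Matrix V V ℂ)
    (hA : A = ∑ s ∈ Finset.range (k + 1), (θ s : ℂ) • E s)
    (hB : B = ∑ s ∈ Finset.range (k + 1), ((-1 : ℂ)) ^ s • E s) :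
    (∃ γ : ℂ, ‖γ‖ = 1 ∧
        NormedSpace.exp ((-(Complex.I * (τ : ℂ))) • A) = γ • B) ↔
      (∀ s, 1 ≤ s → s ≤ k →
        ∃ z : ℤ, Odd z ∧ τ * (θ s - θ (s - 1)) = z * Real.pi) := by
  
  have hexp : NormedSpace.exp ((-(Complex.I * (τ : ℂ))) • A)
      = ∑ s ∈ Finset.range (k + 1), Complex.exp (-(Complex.I * τ) * θ s) • E s := by
    rw [hA, Finset.smul_sum]
    simp_rw [smul_smul]
    exact aux_exp_sum_smul_idem k E hE_mul hE_sum _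
  constructor
  · rintro ⟨γ, hγ, hγeq⟩
    have hγ0 : γ ≠ 0 := fun h => by simp [h] at hγ
    have hco : ∀ s ≤ k, Complex.exp (-(Complex.I * τ) * θ s) = γ * (-1) ^ s := by
      intro s hs
      refine aux_coeff_ext k E hE_ne hE_mul (fun s => Complex.exp (-(Complex.I * τ) * θ s)) (fun s => γ * (-1)^s) ?_ s hs
      rw [← hexp, hγeq, hB, Finset.smul_sum]
      simp_rw [smul_smul]
    intro s hs1 hsk
    have h1 := hco s hsk
    have h2 := hco (s-1) (le_trans (Nat.sub_le s 1) hsk)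
    have hs' : s - 1 + 1 = s := Nat.succ_pred_eq_of_pos hs1
    have hratio : Complex.exp (-(Complex.I * τ) * θ s - -(Complex.I * τ) * θ (s-1))
        = Complex.exp (Real.pi * Complex.I) := by
      rw [Complex.exp_sub, h1, h2, Complex.exp_pi_mul_I]
      have hpow : ((-1:ℂ)) ^ s = (-1)^(s-1) * (-1) := by rw [← pow_succ, hs']
      have hne : γ * (-1:ℂ)^(s-1) ≠ 0 := mul_ne_zero hγ0 (pow_ne_zero _ (by norm_num))
      rw [hpow, div_eq_iff hne]
      ring
    obtain ⟨n, hn⟩ := Complex.exp_eq_exp_iff_exists_int.mp hratio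
    refine ⟨-(2*n+1), ⟨-(n+1), by ring⟩, ?_⟩
    have him := congrArg Complex.im hn
    simp only [Complex.sub_im, Complex.add_im, Complex.mul_im, Complex.neg_im, Complex.neg_re,
      Complex.mul_re, Complex.mul_im, Complex.I_re, Complex.I_im, Complex.ofReal_re,
      Complex.ofReal_im, Complex.intCast_re, Complex.intCast_im] at him
    norm_num at him
    push_cast
    linarith [him]
  · intro hodd
    have habs : ‖Complex.exp (-(Complex.I * τ) * θ 0)‖ = 1 := by
      rw [Complex.norm_exp]
      have : (-(Complex.I * (τ:ℂ)) * (θ 0 : ℂ)).re = 0 := by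
        simp [Complex.mul_re]
      rw [this, Real.exp_zero]
    refine ⟨Complex.exp (-(Complex.I * τ) * θ 0), habs, ?_⟩
    have hcoef : ∀ s, s ≤ k → Complex.exp (-(Complex.I * τ) * θ s)
        = (-1:ℂ)^s * Complex.exp (-(Complex.I * τ) * θ 0) := by
      intro s
      induction s with
      | zero => simp
      | succ m ih =>
        intro hs
        obtain ⟨z, hzodd, hz⟩ := hodd (m+1) (Nat.le_add_left 1 m) hs
        have hm := ih (le_trans (Nat.le_succ m) hs)
        have hz' : ((τ * (θ (m+1) - θ m) : ℝ) : ℂ) = ((z * Real.pi : ℝ) : ℂ) := by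
          exact_mod_cast congrArg (Complex.ofReal) hz
        have key : (-(Complex.I * τ) * θ (m+1))
            = (-(Complex.I * τ) * θ m) + ((-z : ℤ) : ℂ) * (Real.pi * Complex.I) := by
          push_cast at hz' ⊢
          linear_combination (-Complex.I) * hz'
        rw [key, Complex.exp_add, hm, Complex.exp_int_mul, Complex.exp_pi_mul_I,
          Odd.neg_one_zpow hzodd.neg, pow_succ]
        ring
    rw [hexp, hB, Finset.smul_sum]
    refine Finset.sum_congr rfl fun s hs => ?_
    rw [hcoef s (Nat.lt_succ_iff.mp (Finset.mem_range.mp hs)), smul_smul, mul_comm]
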